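/- Let n ≥ 1, let Ω_I be a nonempty compact subset of the open northern hemisphere S^n_+ = {x ∈ S^n : x_{n+1} > 0}, and let (Ω_O^k)_{k≥1} be a nonincreasing sequence of nonempty compact subsets of the closed southern hemisphere {x ∈ S^n : x_{n+1} ≤ 0} with Ω_O = ⋂_{k≥1} Ω_O^k nonempty. Let d : Ω_O^1 → (0,∞) be continuous, and define ρ_k(x) = inf_{y ∈ Ω_O^k} d(y)/(1 − x·y) and ρ(x) = inf_{y ∈ Ω_O} d(y)/(1 − x·y) for x ∈ Ω_I. Then the radial graphs R_{ρ_k} = {ρ_k(x)·x : x ∈ Ω_I} converge to R_ρ = {ρ(x)·x : x ∈ Ω_I} in the Hausdorff metric: d_H(R_{ρ_k}, R_ρ) → 0 as k → ∞. -/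

import Mathlib

open scoped RealInnerProductSpace

/-- Hausdorff convergence of the radial graphs of
`ρ_k(x) = inf_{y ∈ Ω_O^k} d(y)/(1 - x·y)` to the radial graph of
`ρ(x) = inf_{y ∈ ⋂ₖ Ω_O^k} d(y)/(1 - x·y)` as the output domains shrink. -/
theorem stmt_3 {n : ℕ} (hn : 1 ≤ n)
    (ΩI : Set (EuclideanSpace ℝ (Fin (n + 1))))
    (hIne : ΩI.Nonempty) (hIc : IsCompact ΩI)
    (hI : ΩI ⊆ {x : EuclideanSpace ℝ (Fin (n + 1)) |
      x ∈ Metric.sphere (0 : EuclideanSpace ℝ (Fin (n + 1))) 1 ∧ 0 < x (Fin.last n)})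
    (ΩOseq : ℕ → Set (EuclideanSpace ℝ (Fin (n + 1))))
    (hanti : Antitone ΩOseq)
    (hOne : ∀ k, (ΩOseq k).Nonempty) (hOc : ∀ k, IsCompact (ΩOseq k))
    (hOsub : ∀ k, ΩOseq k ⊆ {x : EuclideanSpace ℝ (Fin (n + 1)) |
      x ∈ Metric.sphere (0 : EuclideanSpace ℝ (Fin (n + 1))) 1 ∧ x (Fin.last n) ≤ 0})
    (hInter : (⋂ k, ΩOseq k).Nonempty)
    (d : EuclideanSpace ℝ (Fin (n + 1)) → ℝ)
    (hdc : ContinuousOn d (ΩOseq 0)) (hdpos : ∀ y ∈ ΩOseq 0, 0 < d y)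
    (ρk : ℕ → EuclideanSpace ℝ (Fin (n + 1)) → ℝ)
    (ρ : EuclideanSpace ℝ (Fin (n + 1)) → ℝ)
    (hρk : ∀ k, ∀ x ∈ ΩI, ρk k x = sInf ((fun y => d y / (1 - ⟪x, y⟫)) '' ΩOseq k))
    (hρ : ∀ x ∈ ΩI, ρ x = sInf ((fun y => d y / (1 - ⟪x, y⟫)) '' (⋂ k, ΩOseq k))) :
    Filter.Tendsto
      (fun k => Metric.hausdorffDist
        ((fun x => ρk k x • x) '' ΩI) ((fun x => ρ x • x) '' ΩI))
      Filter.atTop (nhds 0) := by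
  classical
  set Ω : Set (EuclideanSpace ℝ (Fin (n + 1))) := ⋂ k, ΩOseq k with hΩdef
  have hΩsub : ∀ k, Ω ⊆ ΩOseq k := fun k => Set.iInter_subset _ k
  -- positivity of the denominator
  have hden : ∀ x ∈ ΩI, ∀ y ∈ ΩOseq 0, 0 < 1 - ⟪x, y⟫ := by
    intro x hx y hy
    have hxs := hI hx
    have hys := hOsub 0 hy
    have hxn : ‖x‖ = 1 := by simpa using mem_sphere_zero_iff_norm.mp hxs.1
    have hyn : ‖y‖ = 1 := by simpa using mem_sphere_zero_iff_norm.mp hys.1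
    have hxy : x ≠ y := by
      intro h
      rw [h] at hxs
      exact absurd hxs.2 (not_lt.mpr hys.2)
    have h2 : ‖x - y‖ ^ 2 = 2 * (1 - ⟪x, y⟫) := by
      rw [norm_sub_sq_real, hxn, hyn]; ring
    have h3 : 0 < ‖x - y‖ ^ 2 :=
      pow_pos (norm_pos_iff.mpr (sub_ne_zero.mpr hxy)) 2
    nlinarith
  -- the function of two variables
  set f : (EuclideanSpace ℝ (Fin (n + 1))) × (EuclideanSpace ℝ (Fin (n + 1))) → ℝ := fun p => d p.2 / (1 - ⟪p.1, p.2⟫) with hfdef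
  have hfc : ContinuousOn f (ΩI ×ˢ ΩOseq 0) := by
    apply ContinuousOn.div
    · exact hdc.comp continuous_snd.continuousOn (fun p hp => hp.2)
    · exact (continuous_const.sub continuous_inner).continuousOn
    · intro p hp
      exact (hden p.1 hp.1 p.2 hp.2).ne'
  have hK : IsCompact (ΩI ×ˢ ΩOseq 0) := hIc.prod (hOc 0)
  have hUC := Metric.uniformContinuousOn_iff.mp
    (hK.uniformContinuousOn_of_continuous hfc)
  have hfnn : ∀ x ∈ ΩI, ∀ y ∈ ΩOseq 0, 0 ≤ d y / (1 - ⟪x, y⟫) :=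
    fun x hx y hy => div_nonneg (hdpos y hy).le (hden x hx y hy).le
  -- shrinking lemma
  have shrink : ∀ δ : ℝ, 0 < δ → ∃ N, ∀ k ≥ N, ΩOseq k ⊆ Metric.thickening δ Ω := by
    intro δ hδ
    have hex : ∃ N, ΩOseq N \ Metric.thickening δ Ω = ∅ := by
      by_contra h
      push_neg at h
      have hne : ∀ k, (ΩOseq k \ Metric.thickening δ Ω).Nonempty := h
      have hdir : Directed (· ⊇ ·) (fun k => ΩOseq k \ Metric.thickening δ Ω) := by
        intro i j
        exact ⟨max i j, Set.diff_subset_diff_left (hanti (le_max_left i j)),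
          Set.diff_subset_diff_left (hanti (le_max_right i j))⟩
      have hcomp : ∀ k, IsCompact (ΩOseq k \ Metric.thickening δ Ω) := by
        intro k
        rw [Set.diff_eq]
        exact (hOc k).inter_right Metric.isOpen_thickening.isClosed_compl
      have hcl : ∀ k, IsClosed (ΩOseq k \ Metric.thickening δ Ω) :=
        fun k => (hcomp k).isClosed
      obtain ⟨z, hz⟩ :=
        IsCompact.nonempty_iInter_of_directed_nonempty_isCompact_isClosed
          _ hdir hne hcomp hcl
      simp only [Set.mem_iInter, Set.mem_diff] at hz
      have hzΩ : z ∈ Ω := Set.mem_iInter.mpr fun k => (hz k).1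
      exact (hz 0).2 (Metric.self_subset_thickening hδ Ω hzΩ)
    obtain ⟨N, hN⟩ := hex
    refine ⟨N, fun k hk y hy => ?_⟩
    by_contra hyU
    have : y ∈ ΩOseq N \ Metric.thickening δ Ω := ⟨hanti hk hy, hyU⟩
    rw [hN] at this
    exact this
  -- the key uniform approximation
  have key : ∀ ε : ℝ, 0 < ε → ∃ N, ∀ k ≥ N, ∀ x ∈ ΩI, |ρk k x - ρ x| ≤ ε := by
    intro ε hε
    obtain ⟨δ, hδ, hδε⟩ := hUC ε hε
    obtain ⟨N, hN⟩ := shrink δ hδ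
    refine ⟨N, fun k hk x hx => ?_⟩
    have hsubk : ΩOseq k ⊆ ΩOseq 0 := hanti (Nat.zero_le k)
    have hbb : BddBelow ((fun y => d y / (1 - ⟪x, y⟫)) '' ΩOseq k) := by
      refine ⟨0, ?_⟩
      rintro v ⟨y, hy, rfl⟩
      exact hfnn x hx y (hsubk hy)
    have hbbΩ : BddBelow ((fun y => d y / (1 - ⟪x, y⟫)) '' Ω) := by
      refine ⟨0, ?_⟩
      rintro v ⟨y, hy, rfl⟩
      exact hfnn x hx y (hsubk (hΩsub k hy))
    have h1 : ρk k x ≤ ρ x := by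
      rw [hρk k x hx, hρ x hx]
      exact csInf_le_csInf hbb (hInter.image _) (Set.image_mono (hΩsub k))
    -- the infimum over ΩOseq k is attained
    obtain ⟨y, hy, hyeq⟩ : ∃ y ∈ ΩOseq k, d y / (1 - ⟪x, y⟫) = ρk k x := by
      have hcont : ContinuousOn (fun y => d y / (1 - ⟪x, y⟫)) (ΩOseq k) := by
        apply ContinuousOn.div
        · exact hdc.mono hsubk
        · exact (continuous_const.sub (continuous_const.inner continuous_id)).continuousOn
        · intro y hy
          exact (hden x hx y (hsubk hy)).ne'
      have himc := (hOc k).image_of_continuousOn hcont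
      have hmem := himc.sInf_mem ((hOne k).image _)
      rw [← hρk k x hx] at hmem
      obtain ⟨y, hy, hyeq⟩ := hmem
      exact ⟨y, hy, hyeq⟩
    obtain ⟨y', hy', hyy'⟩ := Metric.mem_thickening_iff.mp (hN k hk hy)
    have h2 : ρ x ≤ d y' / (1 - ⟪x, y'⟫) := by
      rw [hρ x hx]
      exact csInf_le hbbΩ ⟨y', hy', rfl⟩
    have h3 : dist (d y' / (1 - ⟪x, y'⟫)) (d y / (1 - ⟪x, y⟫)) < ε := by
      have hd : dist ((x, y') : (EuclideanSpace ℝ (Fin (n + 1))) × _) (x, y) < δ := by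
        rw [Prod.dist_eq]
        simp only [dist_self]
        have h5 : dist y' y < δ := by rwa [dist_comm] at hyy'
        exact max_lt hδ h5
      exact hδε (x, y') ⟨hx, hsubk (hΩsub k hy')⟩ (x, y) ⟨hx, hsubk hy⟩ hd
    rw [Real.dist_eq] at h3
    have h4 : d y' / (1 - ⟪x, y'⟫) - d y / (1 - ⟪x, y⟫) < ε :=
      lt_of_le_of_lt (le_abs_self _) h3
    rw [abs_le]
    constructor <;> linarith
  -- conclude Hausdorff convergence
  rw [Metric.tendsto_atTop]
  intro ε hε
  obtain ⟨N, hN⟩ := key (ε / 2) (by linarith)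
  refine ⟨N, fun k hk => ?_⟩
  have hnorm : ∀ x ∈ ΩI, ‖x‖ = 1 := by
    intro x hx
    simpa using mem_sphere_zero_iff_norm.mp (hI hx).1
  have hdsmul : ∀ x ∈ ΩI, dist (ρk k x • x) (ρ x • x) ≤ ε / 2 := by
    intro x hx
    rw [dist_eq_norm, ← sub_smul, norm_smul, Real.norm_eq_abs, hnorm x hx, mul_one]
    exact hN k hk x hx
  have hb : Metric.hausdorffDist ((fun x => ρk k x • x) '' ΩI)
      ((fun x => ρ x • x) '' ΩI) ≤ ε / 2 := by
    apply Metric.hausdorffDist_le_of_mem_dist (by linarith)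
    · rintro p ⟨x, hx, rfl⟩
      exact ⟨ρ x • x, ⟨x, hx, rfl⟩, hdsmul x hx⟩
    · rintro p ⟨x, hx, rfl⟩
      exact ⟨ρk k x • x, ⟨x, hx, rfl⟩, by rw [dist_comm]; exact hdsmul x hx⟩
  rw [Real.dist_eq, sub_zero, abs_of_nonneg Metric.hausdorffDist_nonneg]
  linarith
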